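/- Let $2 \le k \le n/2$ and suppose $\mathcal{F}^* \subseteq \mathcal{F} \subseteq \binom{[n]}{k}$ have the property that whenever $B, B' \in \mathcal{F}$ satisfy $B \cap B' = \emptyset$, then both $B, B' \in \mathcal{F}^*$. Then $|\mathcal{F}^*| + \frac{n}{k}|\mathcal{F} \setminus \mathcal{F}^*| \le \binom{n}{k}$. -/

import Mathlib

open Finset

section arcs
variable {n k : ℕ}

def arcI (n k : ℕ) (s : ZMod n) : Finset (ZMod n) :=
  (Finset.range k).image (fun i : ℕ => s + (i : ZMod n))

lemma mem_arcI {s x : ZMod n} : x ∈ arcI n k s ↔ ∃ i < k, x = s + (i : ZMod n) := by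
  simp [arcI, eq_comm]

lemma card_arcI [NeZero n] (hkn : k ≤ n) (s : ZMod n) : (arcI n k s).card = k := by
  rw [arcI, card_image_of_injOn, card_range]
  intro i hi j hj hij
  simp only [mem_coe, mem_range] at hi hj
  have h : ((i : ZMod n)).val = ((j : ZMod n)).val := by
    have h2 : (i : ZMod n) = (j : ZMod n) := add_left_cancel hij
    rw [h2]
  rwa [ZMod.val_cast_of_lt (by omega), ZMod.val_cast_of_lt (by omega)] at h

lemma disj_arcI [NeZero n] (hkn : 2 * k ≤ n) (x : ZMod n) :
    Disjoint (arcI n k x) (arcI n k (x - (k : ZMod n))) := by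
  rw [Finset.disjoint_left]
  rintro a ha ha'
  obtain ⟨i, hi, rfl⟩ := mem_arcI.1 ha
  obtain ⟨j, hj, hEq⟩ := mem_arcI.1 ha'
  have h2 : ((i + k : ℕ) : ZMod n) = ((j : ℕ) : ZMod n) := by
    push_cast
    linear_combination hEq
  have h3 := congrArg ZMod.val h2
  rw [ZMod.val_cast_of_lt (by omega), ZMod.val_cast_of_lt (by omega)] at h3
  omega

lemma arc_main [NeZero n] (hk : 1 ≤ k) (hkn : 2 * k ≤ n) (T T' : Finset (ZMod n))
    (hsub : T' ⊆ T) (h0 : (0 : ZMod n) ∈ T')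
    (hint : ∀ s ∈ T, ∀ t ∈ T', ¬ Disjoint (arcI n k s) (arcI n k t)) :
    T.card + T'.card ≤ 2 * k := by
  classical
  set f : ZMod n → ZMod n := fun x => if x ∈ arcI n k 0 then x else x + (k : ZMod n) with hf
  -- f maps T into arcI n k 0
  have hW : ∀ t ∈ T, f t ∈ arcI n k 0 := by
    intro t ht
    by_cases htI : t ∈ arcI n k 0
    · simpa [hf, htI] using htI
    · obtain ⟨a, ha1, ha2⟩ := Finset.not_disjoint_iff.1 (hint t ht 0 h0)
      obtain ⟨i, hi, rfl⟩ := mem_arcI.1 ha1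
      obtain ⟨j, hj, hEq⟩ := mem_arcI.1 ha2
      rcases le_or_gt i j with hij | hij
      · exfalso
        apply htI
        rw [mem_arcI]
        refine ⟨j - i, by omega, ?_⟩
        push_cast [Nat.cast_sub hij]
        linear_combination hEq
      · rw [hf]
        simp only [htI, if_false]
        rw [mem_arcI]
        refine ⟨k - (i - j), by omega, ?_⟩
        push_cast [Nat.cast_sub (by omega : i - j ≤ k), Nat.cast_sub (by omega : j ≤ i)]
        linear_combination hEq
  -- each fiber of f meets T ∪ T' at most twice (with multiplicity)
  have hfiber : ∀ x, (T.filter (fun t => f t = x)).card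
      + (T'.filter (fun t => f t = x)).card ≤ 2 := by
    intro x
    have hTx : T.filter (fun t => f t = x) ⊆ {x, x - (k : ZMod n)} := by
      intro t ht
      rw [mem_filter] at ht
      obtain ⟨ht, hfx⟩ := ht
      by_cases htI : t ∈ arcI n k 0
      · simp only [hf, htI, if_true] at hfx
        simp [hfx]
      · simp only [hf, htI, if_false] at hfx
        have : t = x - (k : ZMod n) := by linear_combination hfx
        simp [this]
    by_cases hT' : (T'.filter (fun t => f t = x)).Nonempty
    · obtain ⟨t', ht'⟩ := hT'
      have ht'T' : t' ∈ T' := (mem_filter.1 ht').1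
      have hsingle : T.filter (fun t => f t = x) ⊆ {t'} := by
        intro u hu
        rw [mem_singleton]
        by_contra hne
        have huT : u ∈ T := (mem_filter.1 hu).1
        have hu2 := hTx hu
        have ht2 := hTx (mem_filter.2 ⟨hsub ht'T', (mem_filter.1 ht').2⟩)
        simp only [mem_insert, mem_singleton] at hu2 ht2
        have hdisj : Disjoint (arcI n k u) (arcI n k t') := by
          rcases hu2 with rfl | rfl <;> rcases ht2 with h | h
          · exact absurd h.symm hne
          · rw [h]; exact disj_arcI hkn u
          · rw [h]; exact (disj_arcI hkn x).symm
          · rw [h] at hne; exact absurd rfl hne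
        exact hint u huT t' ht'T' hdisj
      have h1 := card_le_card hsingle
      have h2 := card_le_card ((filter_subset_filter (fun t => f t = x) hsub).trans hsingle)
      simp only [card_singleton] at h1 h2
      omega
    · rw [not_nonempty_iff_eq_empty] at hT'
      have := card_le_card hTx
      have h2 : ({x, x - (k : ZMod n)} : Finset (ZMod n)).card ≤ 2 :=
        card_insert_le _ _ |>.trans (by simp)
      simp [hT']
      omega
  have hT : T.card = ∑ x ∈ arcI n k 0, (T.filter (fun t => f t = x)).card :=
    card_eq_sum_card_fiberwise hW
  have hT' : T'.card = ∑ x ∈ arcI n k 0, (T'.filter (fun t => f t = x)).card :=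
    card_eq_sum_card_fiberwise (fun t ht => hW t (hsub ht))
  calc T.card + T'.card
      = ∑ x ∈ arcI n k 0, ((T.filter (fun t => f t = x)).card
        + (T'.filter (fun t => f t = x)).card) := by rw [hT, hT', Finset.sum_add_distrib]
    _ ≤ ∑ _x ∈ arcI n k 0, 2 := Finset.sum_le_sum (fun x _ => hfiber x)
    _ = 2 * k := by rw [Finset.sum_const, card_arcI (by omega), smul_eq_mul, mul_comm]

lemma arcI_sub (c s : ZMod n) :
    arcI n k (s - c) = (arcI n k s).image (fun x => x - c) := by
  rw [arcI, arcI, image_image]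
  apply image_congr
  intro i _
  simp only [Function.comp_apply]
  ring

lemma arc_bound [NeZero n] (hk : 1 ≤ k) (hkn : 2 * k ≤ n) (T T' : Finset (ZMod n))
    (hsub : T' ⊆ T)
    (hint : ∀ s ∈ T, ∀ t ∈ T', ¬ Disjoint (arcI n k s) (arcI n k t)) :
    k * T.card + (n - k) * T'.card ≤ k * n := by
  rcases T'.eq_empty_or_nonempty with rfl | ⟨t0, ht0⟩
  · simp only [card_empty, mul_zero, add_zero]
    have h1 : T.card ≤ n := by
      have h2 := Finset.card_le_univ T
      rwa [ZMod.card] at h2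
    exact Nat.mul_le_mul_left k h1
  · have hinj : Function.Injective (fun x : ZMod n => x - t0) :=
      fun a b h => by simpa using sub_left_injective h
    set T₁ := T.image (fun x => x - t0) with hT₁
    set T₁' := T'.image (fun x => x - t0) with hT₁'
    have hmain : T₁.card + T₁'.card ≤ 2 * k := by
      apply arc_main hk hkn _ _ (image_subset_image hsub)
      · exact mem_image.2 ⟨t0, ht0, by simp⟩
      · intro s hs t ht
        obtain ⟨s', hs', rfl⟩ := mem_image.1 hs
        obtain ⟨t', ht', rfl⟩ := mem_image.1 ht
        intro hd
        rw [arcI_sub, arcI_sub, Finset.disjoint_image hinj] at hd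
        exact hint s' hs' t' ht' hd
    rw [hT₁, hT₁', card_image_of_injective _ hinj, card_image_of_injective _ hinj] at hmain
    have hb : T'.card ≤ k := by
      have := card_le_card hsub
      omega
    have hkn' : k ≤ n := by omega
    zify [hkn, hkn']
    nlinarith [hmain, hb, hkn]

end arcs

section permcount

variable {α : Type*} [Fintype α] [DecidableEq α]

lemma exists_perm_image (S Y : Finset α) (h : S.card = Y.card) :
    ∃ π : Equiv.Perm α, S.image π = Y := by
  have h1 : Fintype.card {x // x ∈ S} = Fintype.card {x // x ∈ Y} := by
    simp [Fintype.card_coe, h]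
  have h2 : Fintype.card {x // ¬x ∈ S} = Fintype.card {x // ¬x ∈ Y} := by
    rw [Fintype.card_subtype_compl, Fintype.card_subtype_compl, h1]
  refine ⟨Equiv.subtypeCongr (Fintype.equivOfCardEq h1) (Fintype.equivOfCardEq h2), ?_⟩
  have hsub : S.image (Equiv.subtypeCongr (Fintype.equivOfCardEq h1)
      (Fintype.equivOfCardEq h2)) ⊆ Y := by
    intro y hy
    rw [mem_image] at hy
    obtain ⟨x, hx, rfl⟩ := hy
    simp [Equiv.subtypeCongr, hx]
  apply Finset.eq_of_subset_of_card_le hsub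
  rw [Finset.card_image_of_injective _ (Equiv.injective _), h]

lemma count_perm_eq (S Y Y' : Finset α) (h : Y.card = Y'.card) :
    (Finset.univ.filter fun σ : Equiv.Perm α => S.image σ = Y).card
      = (Finset.univ.filter fun σ : Equiv.Perm α => S.image σ = Y').card := by
  obtain ⟨π, hπ⟩ := exists_perm_image Y Y' h
  have hπ' : Y'.image ⇑π.symm = Y := by
    rw [← hπ, Finset.image_image]
    simp
  apply Finset.card_bij' (fun σ _ => σ.trans π) (fun σ _ => σ.trans π.symm)
  · intro σ _
    ext x
    simp
  · intro σ _
    ext x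
    simp
  · intro σ hσ
    rw [mem_filter] at hσ ⊢
    refine ⟨mem_univ _, ?_⟩
    rw [Equiv.coe_trans, ← Finset.image_image, hσ.2, hπ]
  · intro σ hσ
    rw [mem_filter] at hσ ⊢
    refine ⟨mem_univ _, ?_⟩
    rw [Equiv.coe_trans, ← Finset.image_image, hσ.2, hπ']

lemma count_perm_master (S : Finset α) :
    ∑ Y ∈ Finset.univ.powersetCard S.card,
      (Finset.univ.filter fun σ : Equiv.Perm α => S.image σ = Y).card
      = Nat.factorial (Fintype.card α) := by
  rw [← Fintype.card_perm, ← Finset.card_univ]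
  symm
  apply Finset.card_eq_sum_card_fiberwise
  intro σ _
  rw [Finset.mem_coe, Finset.mem_powersetCard]
  exact ⟨Finset.subset_univ _, Finset.card_image_of_injective _ σ.injective⟩

lemma count_perm_val (S Y : Finset α) (hS : S.card = Y.card) :
    (Finset.univ.filter fun σ : Equiv.Perm α => S.image σ = Y).card
      * (Fintype.card α).choose S.card = Nat.factorial (Fintype.card α) := by
  have h := count_perm_master S
  rw [Finset.sum_congr rfl (fun Y' hY' => count_perm_eq S Y' Y
    (by rw [(Finset.mem_powersetCard.1 hY').2, hS]))] at h
  rw [Finset.sum_const, smul_eq_mul, Finset.card_powersetCard, Finset.card_univ] at h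
  rw [mul_comm]
  exact h

lemma count_perm_pos (S Y : Finset α) (hS : S.card = Y.card) :
    0 < (Finset.univ.filter fun σ : Equiv.Perm α => S.image σ = Y).card := by
  obtain ⟨π, hπ⟩ := exists_perm_image S Y hS
  exact Finset.card_pos.2 ⟨π, Finset.mem_filter.2 ⟨Finset.mem_univ _, hπ⟩⟩

end permcount

section perm_count
variable {α : Type*} [Fintype α] [DecidableEq α]

lemma count_perm_eq_S (S S' Y : Finset α) (h : S.card = S'.card) :
    (Finset.univ.filter fun σ : Equiv.Perm α => S.image σ = Y).card
      = (Finset.univ.filter fun σ : Equiv.Perm α => S'.image σ = Y).card := by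
  obtain ⟨π, hπ⟩ := exists_perm_image S' S h.symm
  apply Finset.card_bij' (fun σ _ => π.trans σ) (fun σ _ => π.symm.trans σ)
  · intro σ hσ
    rw [mem_filter] at hσ ⊢
    refine ⟨mem_univ _, ?_⟩
    rw [Equiv.coe_trans, ← Finset.image_image, hπ, hσ.2]
  · intro σ hσ
    rw [mem_filter] at hσ ⊢
    refine ⟨mem_univ _, ?_⟩
    have hπ' : S.image ⇑π.symm = S' := by
      rw [← hπ, Finset.image_image]
      simp
    rw [Equiv.coe_trans, ← Finset.image_image, hπ', hσ.2]
  · intro σ _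
    ext x
    simp
  · intro σ _
    ext x
    simp
end perm_count

theorem stmt_4 (n k : ℕ) (hk : 2 ≤ k) (hkn : 2 * k ≤ n)
    (F Fs : Finset (Finset ℕ)) (hFs : Fs ⊆ F)
    (hF : F ⊆ (Finset.Icc 1 n).powersetCard k)
    (hprop : ∀ B ∈ F, ∀ B' ∈ F, B ∩ B' = ∅ → B ∈ Fs ∧ B' ∈ Fs) :
    (Fs.card : ℚ) + (n / k : ℚ) * (F \ Fs).card ≤ Nat.choose n k := by
  classical
  haveI : NeZero n := ⟨by omega⟩
  set D := F \ Fs with hD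
  -- bijection ZMod n ≃ Icc 1 n
  have hcard : Fintype.card (ZMod n) = Fintype.card ↥(Finset.Icc (1:ℕ) n) := by
    rw [ZMod.card, Fintype.card_coe, Nat.card_Icc]
    omega
  set e : ZMod n ≃ ↥(Finset.Icc (1:ℕ) n) := Fintype.equivOfCardEq hcard with he
  set c : ZMod n → ℕ := fun j => (e j : ℕ) with hc
  have hcinj : Function.Injective c := fun a b h => e.injective (Subtype.val_injective h)
  have hcuniv : Finset.univ.image c = Finset.Icc 1 n := by
    rw [hc]
    have : (fun j => (e j : ℕ)) = Subtype.val ∘ ⇑e := rfl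
    rw [this, ← Finset.image_image, Finset.image_univ_equiv, Finset.univ_eq_attach,
      Finset.attach_image_val]
  -- arcs
  set A : Equiv.Perm (ZMod n) → ZMod n → Finset ℕ :=
    fun σ s => (arcI n k s).image (fun j => c (σ j)) with hA
  set N : ℕ := (Finset.univ.filter fun σ : Equiv.Perm (ZMod n) =>
    (arcI n k 0).image σ = arcI n k 0).card with hN
  have hIcard : ∀ s : ZMod n, (arcI n k s).card = k := card_arcI (by omega)
  -- counting: for any k-subset X of Icc 1 n and any s, #{σ | A σ s = X} = N
  have hcount : ∀ X ∈ (Finset.Icc 1 n).powersetCard k, ∀ s : ZMod n,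
      (Finset.univ.filter fun σ : Equiv.Perm (ZMod n) => A σ s = X).card = N := by
    intro X hX s
    rw [Finset.mem_powersetCard] at hX
    set Y : Finset (ZMod n) := Finset.univ.filter (fun j => c j ∈ X) with hY
    have hYX : Y.image c = X := by
      apply Finset.Subset.antisymm
      · intro x hx
        rw [Finset.mem_image] at hx
        obtain ⟨j, hj, rfl⟩ := hx
        exact (Finset.mem_filter.1 hj).2
      · intro x hx
        have : x ∈ Finset.univ.image c := hcuniv.symm ▸ hX.1 hx
        rw [Finset.mem_image] at this
        obtain ⟨j, _, rfl⟩ := this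
        exact Finset.mem_image_of_mem c (Finset.mem_filter.2 ⟨Finset.mem_univ _, hx⟩)
    have hYcard : Y.card = k := by
      rw [← hX.2, ← hYX, Finset.card_image_of_injective _ hcinj]
    have hcond : ∀ σ : Equiv.Perm (ZMod n), A σ s = X ↔ (arcI n k s).image σ = Y := by
      intro σ
      rw [hA]
      constructor
      · intro h
        apply Finset.image_injective hcinj
        rw [hYX, ← h, Finset.image_image]
        rfl
      · intro h
        rw [← hYX, ← h, Finset.image_image]
        rfl
    rw [Finset.filter_congr (fun σ _ => by rw [hcond σ])]
    rw [count_perm_eq_S (arcI n k s) (arcI n k 0) Y (by rw [hIcard, hIcard])]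
    rw [hN]
    exact count_perm_eq (arcI n k 0) Y (arcI n k 0) (by rw [hYcard, hIcard])
  -- sum over σ of counts of a family
  have hsum : ∀ G : Finset (Finset ℕ), G ⊆ (Finset.Icc 1 n).powersetCard k →
      ∑ σ : Equiv.Perm (ZMod n), (Finset.univ.filter fun s : ZMod n => A σ s ∈ G).card
        = G.card * (n * N) := by
    intro G hG
    have step1 : ∀ σ : Equiv.Perm (ZMod n),
        (Finset.univ.filter fun s : ZMod n => A σ s ∈ G).card
          = ∑ X ∈ G, (Finset.univ.filter fun s : ZMod n => A σ s = X).card := by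
      intro σ
      rw [Finset.card_eq_sum_card_fiberwise
        (s := Finset.univ.filter fun s : ZMod n => A σ s ∈ G)
        (f := fun s => A σ s) (t := G) (fun s hs => Finset.mem_coe.2 (Finset.mem_filter.1 (Finset.mem_coe.1 hs)).2)]
      apply Finset.sum_congr rfl
      intro X hX
      congr 1
      ext s
      simp only [Finset.mem_filter, Finset.mem_univ, true_and, and_iff_right_iff_imp]
      intro h
      rw [h]
      exact hX
    calc ∑ σ : Equiv.Perm (ZMod n), (Finset.univ.filter fun s : ZMod n => A σ s ∈ G).card
        = ∑ σ : Equiv.Perm (ZMod n), ∑ X ∈ G,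
            (Finset.univ.filter fun s : ZMod n => A σ s = X).card := by
          exact Finset.sum_congr rfl fun σ _ => step1 σ
      _ = ∑ X ∈ G, ∑ σ : Equiv.Perm (ZMod n),
            (Finset.univ.filter fun s : ZMod n => A σ s = X).card := Finset.sum_comm
      _ = ∑ X ∈ G, (n * N) := by
          apply Finset.sum_congr rfl
          intro X hX
          have swap : ∑ σ : Equiv.Perm (ZMod n),
              (Finset.univ.filter fun s : ZMod n => A σ s = X).card
              = ∑ s : ZMod n,
              (Finset.univ.filter fun σ : Equiv.Perm (ZMod n) => A σ s = X).card := by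
            simp only [Finset.card_filter]
            exact Finset.sum_comm
          rw [swap]
          rw [Finset.sum_congr rfl (fun s _ => hcount X (hG hX) s)]
          rw [Finset.sum_const, Finset.card_univ, ZMod.card, smul_eq_mul]
      _ = G.card * (n * N) := by rw [Finset.sum_const, smul_eq_mul]
  -- per-σ bound
  have hper : ∀ σ : Equiv.Perm (ZMod n),
      k * (Finset.univ.filter fun s : ZMod n => A σ s ∈ Fs).card
        + n * (Finset.univ.filter fun s : ZMod n => A σ s ∈ D).card ≤ k * n := by
    intro σ
    set T := Finset.univ.filter fun s : ZMod n => A σ s ∈ F with hT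
    set T' := Finset.univ.filter fun s : ZMod n => A σ s ∈ D with hT'
    have hsub : T' ⊆ T := by
      intro s hs
      rw [hT', Finset.mem_filter] at hs
      rw [hT, Finset.mem_filter]
      exact ⟨hs.1, Finset.sdiff_subset hs.2⟩
    have hint : ∀ s ∈ T, ∀ t ∈ T', ¬ Disjoint (arcI n k s) (arcI n k t) := by
      intro s hs t ht hdisj
      have hsF : A σ s ∈ F := (Finset.mem_filter.1 hs).2
      have htD : A σ t ∈ D := (Finset.mem_filter.1 ht).2
      have htF : A σ t ∈ F := (Finset.sdiff_subset) htD
      have hAdisj : A σ s ∩ A σ t = ∅ := by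
        rw [← Finset.disjoint_iff_inter_eq_empty, hA]
        exact (Finset.disjoint_image (hcinj.comp σ.injective)).2 hdisj
      have := (hprop _ hsF _ htF hAdisj).2
      rw [hD, Finset.mem_sdiff] at htD
      exact htD.2 this
    have hbound := arc_bound (by omega) hkn T T' hsub hint
    have hsplit : T.card = (Finset.univ.filter fun s : ZMod n => A σ s ∈ Fs).card
        + T'.card := by
      rw [hT, hT']
      rw [← Finset.card_union_of_disjoint]
      · congr 1
        ext s
        simp only [Finset.mem_filter, Finset.mem_union, Finset.mem_univ, true_and, hD,
          Finset.mem_sdiff]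
        constructor
        · intro h
          by_cases hsmem : A σ s ∈ Fs
          · exact Or.inl hsmem
          · exact Or.inr ⟨h, hsmem⟩
        · rintro (h | h)
          · exact hFs h
          · exact h.1
      · rw [Finset.disjoint_filter]
        intro s _ hs
        rw [hD, Finset.mem_sdiff]
        exact fun h => h.2 hs
    rw [hsplit] at hbound
    have hkle : k ≤ n := by omega
    zify [hkle] at hbound ⊢
    linarith
  -- global summation
  have hsumineq : k * (Fs.card * (n * N)) + n * (D.card * (n * N))
      ≤ Nat.factorial n * (k * n) := by
    have hstep := Finset.sum_le_sum (fun σ (_ : σ ∈ (Finset.univ : Finset (Equiv.Perm (ZMod n)))) => hper σ)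
    rw [Finset.sum_add_distrib, ← Finset.mul_sum, ← Finset.mul_sum,
      hsum Fs (hFs.trans hF), hsum D ((Finset.sdiff_subset).trans hF),
      Finset.sum_const, Finset.card_univ, Fintype.card_perm, ZMod.card, smul_eq_mul] at hstep
    exact hstep
  have hNval := count_perm_val (arcI n k 0) (arcI n k 0) rfl
  rw [ZMod.card, hIcard 0] at hNval
  have hNpos : 0 < N := count_perm_pos _ _ rfl
  have hfinal : k * Fs.card + n * D.card ≤ k * Nat.choose n k := by
    have h1 : (k * Fs.card + n * D.card) * (n * N) ≤ (k * Nat.choose n k) * (n * N) := by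
      calc (k * Fs.card + n * D.card) * (n * N)
          = k * (Fs.card * (n * N)) + n * (D.card * (n * N)) := by ring
        _ ≤ Nat.factorial n * (k * n) := hsumineq
        _ = (k * Nat.choose n k) * (n * N) := by rw [← hNval]; ring
    have hpos : 0 < n * N := Nat.mul_pos (by omega) hNpos
    exact Nat.le_of_mul_le_mul_right h1 hpos
  have hQ : (k:ℚ) * Fs.card + n * D.card ≤ k * Nat.choose n k := by exact_mod_cast hfinal
  have hkQ : (0:ℚ) < k := by
    have : 0 < k := by omega
    exact_mod_cast this
  calc (Fs.card:ℚ) + (n/k) * D.card = ((k:ℚ) * Fs.card + n * D.card)/k := by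
        field_simp
    _ ≤ ((k:ℚ) * Nat.choose n k)/k := by gcongr
    _ = Nat.choose n k := by field_simp
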